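/- arXiv:1705.05111 — 3 statements merged into one kernel-verified Lean document; each statement's English description precedes it below -/
import Mathlib

section
/- Let M be a set of morphisms which k-linearly spans T, and let (F, ω): T → T be a k-linear triangle endofunctor such that F(f) = f for every f ∈ M (in particular F fixes every object of obj(M)). Then there exist a unique natural isomorphism ω′: Σ → Σ and a unique isomorphism of triangle functors θ: (F, ω) → (Id_T, ω′) satisfying θ_S = Id_S for every object S of obj(M). -/
/-!
STATEMENT 1: Let M be a set of morphisms which k-linearly spans T, and let
(F, ω): T → T be a k-linear triangle endofunctor such that F(f) = f for every f ∈ M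
(in particular F fixes every object of obj(M)). Then there exist a unique natural
isomorphism ω′: Σ → Σ and a unique isomorphism of triangle functors
θ: (F, ω) → (Id_T, ω′) satisfying θ_S = Id_S for every object S of obj(M).
-/

open CategoryTheory Limits Pretriangulated

/-- `(F, ω)` is a triangle functor. -/
def IsTriangleFunctor {C : Type*} {D : Type*} [Category C] [Category D]
    [HasZeroObject C] [HasZeroObject D] [Preadditive C] [Preadditive D]
    [HasShift C ℤ] [HasShift D ℤ]
    [∀ n : ℤ, (shiftFunctor C n).Additive] [∀ n : ℤ, (shiftFunctor D n).Additive]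
    [Pretriangulated C] [Pretriangulated D] (F : C ⥤ D)
    (ω : shiftFunctor C (1 : ℤ) ⋙ F ≅ F ⋙ shiftFunctor D (1 : ℤ)) : Prop :=
  ∀ T, (T ∈ distTriang C) →
    (Triangle.mk (F.map T.mor₁) (F.map T.mor₂) (F.map T.mor₃ ≫ ω.hom.app T.obj₁)
      ∈ distTriang D)

section Span

variable {T : Type*} [Category T]

/-- The objects appearing as domain or codomain of a morphism in the collection `M`. -/
def objM (M : ∀ X Y : T, Set (X ⟶ Y)) : Set T :=
  {X | ∃ Y : T, (∃ f : X ⟶ Y, f ∈ M X Y) ∨ (∃ f : Y ⟶ X, f ∈ M Y X)}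

/-- Compositions of morphisms from `M`, together with the identity morphisms of the
objects of `obj(M)`. -/
inductive MComp (M : ∀ X Y : T, Set (X ⟶ Y)) : ∀ (X Y : T), (X ⟶ Y) → Prop
  | of {X Y : T} (f : X ⟶ Y) (hf : f ∈ M X Y) : MComp M X Y f
  | id (X : T) (hX : X ∈ objM M) : MComp M X X (𝟙 X)
  | comp {X Y Z : T} (f : X ⟶ Y) (g : Y ⟶ Z) :
      MComp M X Y f → MComp M Y Z g → MComp M X Z (f ≫ g)

variable (k : Type*) [Field k] [Preadditive T] [Linear k T]

/-- `M` k-linearly spans `T`: every morphism between objects of `obj(M)` is a k-linear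
combination of identity morphisms and compositions of morphisms from `M`, and every
object of `T` is isomorphic to a finite direct sum of objects of `obj(M)`. -/
def Spans (M : ∀ X Y : T, Set (X ⟶ Y)) : Prop :=
  (∀ X, X ∈ objM M → ∀ Y, Y ∈ objM M → ∀ f : X ⟶ Y,
      f ∈ Submodule.span k {g : X ⟶ Y | MComp M X Y g}) ∧
  (∀ X : T, ∃ (n : ℕ) (s : Fin n → T) (ι : ∀ i, s i ⟶ X) (π : ∀ i, X ⟶ s i),
      (∀ i, s i ∈ objM M) ∧ (∀ i, ι i ≫ π i = 𝟙 (s i)) ∧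
      (∀ i j, i ≠ j → ι i ≫ π j = 0) ∧ (∑ i, π i ≫ ι i) = 𝟙 X)

end Span

theorem stmt_1 {k : Type*} [Field k] {T : Type*} [Category T] [Preadditive T] [Linear k T]
    [HasZeroObject T] [HasShift T ℤ] [∀ n : ℤ, (shiftFunctor T n).Additive]
    [Pretriangulated T] [HasBinaryBiproducts T]
    -- Hom-finite and Krull–Schmidt:
    (hfin : ∀ X Y : T, FiniteDimensional k (X ⟶ Y)) [IsIdempotentComplete T]
    (M : ∀ X Y : T, Set (X ⟶ Y)) (hspan : Spans k M)
    (F : T ⥤ T) [F.Additive] [F.Linear k]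
    (ω : shiftFunctor T (1 : ℤ) ⋙ F ≅ F ⋙ shiftFunctor T (1 : ℤ))
    (hF : IsTriangleFunctor F ω)
    (hobj : ∀ X, X ∈ objM M → F.obj X = X)
    (hmap : ∀ (X Y : T) (hX : X ∈ objM M) (hY : Y ∈ objM M) (f : X ⟶ Y), f ∈ M X Y →
      F.map f = eqToHom (hobj X hX) ≫ f ≫ eqToHom (hobj Y hY).symm) :
    ∃! p : (shiftFunctor T (1 : ℤ) ≅ shiftFunctor T (1 : ℤ)) × (F ≅ 𝟭 T),
      -- (Id_T, ω′) is a triangle functor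
      IsTriangleFunctor (𝟭 T)
        (Functor.rightUnitor _ ≪≫ p.1 ≪≫ (Functor.leftUnitor _).symm) ∧
      -- θ : (F, ω) → (Id_T, ω′) respects the connecting isomorphisms:
      -- ω′ ∘ θΣ = Σθ ∘ ω
      (∀ X : T, p.2.hom.app ((shiftFunctor T (1 : ℤ)).obj X) ≫ p.1.hom.app X =
        ω.hom.app X ≫ (shiftFunctor T (1 : ℤ)).map (p.2.hom.app X)) ∧
      -- θ_S = Id_S for every S in obj(M)
      (∀ S : T, ∀ hS : S ∈ objM M, p.2.hom.app S = eqToHom (hobj S hS)) := by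
    classical
  obtain ⟨hlin, hdec⟩ := hspan
  choose n s ι π hmem hid horth hsum using hdec
  clear hid horth
  -- F fixes membership of MComp morphisms
  have memM : ∀ {X Y : T} {f : X ⟶ Y}, MComp M X Y f → X ∈ objM M ∧ Y ∈ objM M := by
    intro X Y f h
    induction h with
    | of f hf => exact ⟨⟨_, Or.inl ⟨f, hf⟩⟩, ⟨_, Or.inr ⟨f, hf⟩⟩⟩
    | id X hX => exact ⟨hX, hX⟩
    | comp f g hf hg ihf ihg => exact ⟨ihf.1, ihg.2⟩
  have mapM : ∀ {X Y : T} {f : X ⟶ Y}, MComp M X Y f →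
      ∀ (hX : X ∈ objM M) (hY : Y ∈ objM M),
      F.map f = eqToHom (hobj X hX) ≫ f ≫ eqToHom (hobj Y hY).symm := by
    intro X Y f h
    induction h with
    | of f hf => intro hX hY; exact hmap _ _ hX hY f hf
    | id X hX => intro hX' hY'; simp
    | comp f g hf hg ihf ihg =>
        intro hX hZ
        have hY := (memM hf).2
        rw [F.map_comp, ihf hX hY, ihg hY hZ]
        simp
  -- F acts as "identity" on all morphisms between objects of obj(M)
  have mapObjM : ∀ {X Y : T} (hX : X ∈ objM M) (hY : Y ∈ objM M) (f : X ⟶ Y),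
      F.map f = eqToHom (hobj X hX) ≫ f ≫ eqToHom (hobj Y hY).symm := by
    intro X Y hX hY f
    refine Submodule.span_induction (p := fun g _ =>
        F.map g = eqToHom (hobj X hX) ≫ g ≫ eqToHom (hobj Y hY).symm)
      ?_ ?_ ?_ ?_ (hlin X hX Y hY f)
    · intro g hg
      exact mapM hg hX hY
    · simp
    · intro g g' _ _ ih ih'
      rw [F.map_add, ih, ih']
      simp
    · intro a g _ ih
      rw [F.map_smul, ih]
      simp
  -- the components of θ
  set θa : ∀ X : T, (F.obj X ⟶ X) :=
    fun X => ∑ i, F.map (π X i) ≫ eqToHom (hobj (s X i) (hmem X i)) ≫ ι X i with hθa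
  have key : ∀ {S X : T} (hS : S ∈ objM M) (g : S ⟶ X),
      F.map g ≫ θa X = eqToHom (hobj S hS) ≫ g := by
    intro S X hS g
    rw [hθa, Preadditive.comp_sum]
    have hterm : ∀ i ∈ Finset.univ, F.map g ≫ F.map (π X i) ≫
        eqToHom (hobj (s X i) (hmem X i)) ≫ ι X i =
        eqToHom (hobj S hS) ≫ g ≫ (π X i ≫ ι X i) := by
      intro i _
      rw [← Category.assoc, ← F.map_comp, mapObjM hS (hmem X i)]
      simp
    rw [Finset.sum_congr rfl hterm]
    rw [← Preadditive.comp_sum, ← Preadditive.comp_sum, hsum, Category.comp_id]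
  have nat : ∀ {X Y : T} (f : X ⟶ Y), F.map f ≫ θa Y = θa X ≫ f := by
    intro X Y f
    have h1 : F.map f = ∑ i, F.map (π X i) ≫ F.map (ι X i ≫ f) := by
      conv_lhs => rw [← Category.id_comp f, ← hsum X, Preadditive.sum_comp,
        F.map_sum]
      refine Finset.sum_congr rfl fun i _ => ?_
      rw [Category.assoc, F.map_comp]
    rw [h1, Preadditive.sum_comp]
    have hterm : ∀ i ∈ Finset.univ, (F.map (π X i) ≫ F.map (ι X i ≫ f)) ≫ θa Y =
        (F.map (π X i) ≫ eqToHom (hobj (s X i) (hmem X i)) ≫ ι X i) ≫ f := by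
      intro i _
      rw [Category.assoc, key (hmem X i) (ι X i ≫ f)]
      simp
    rw [Finset.sum_congr rfl hterm, ← Preadditive.sum_comp]
  have θobj : ∀ (S : T) (hS : S ∈ objM M), θa S = eqToHom (hobj S hS) := by
    intro S hS
    have h := key hS (𝟙 S)
    simpa using h
  -- the inverse components
  set ψ : ∀ X : T, (X ⟶ F.obj X) :=
    fun X => ∑ i, π X i ≫ eqToHom (hobj (s X i) (hmem X i)).symm ≫ F.map (ι X i)
    with hψ
  have inv2 : ∀ X, ψ X ≫ θa X = 𝟙 X := by
    intro X
    rw [hψ, Preadditive.sum_comp]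
    have hterm : ∀ i ∈ Finset.univ, (π X i ≫ eqToHom (hobj (s X i) (hmem X i)).symm
        ≫ F.map (ι X i)) ≫ θa X = π X i ≫ ι X i := by
      intro i _
      rw [Category.assoc, Category.assoc, key (hmem X i) (ι X i)]
      simp
    rw [Finset.sum_congr rfl hterm, hsum]
  have inv1 : ∀ X, θa X ≫ ψ X = 𝟙 (F.obj X) := by
    intro X
    rw [hψ, Preadditive.comp_sum]
    have hterm : ∀ i ∈ Finset.univ, θa X ≫ π X i ≫
        eqToHom (hobj (s X i) (hmem X i)).symm ≫ F.map (ι X i) =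
        F.map (π X i ≫ ι X i) := by
      intro i _
      rw [← Category.assoc, ← nat (π X i), θobj (s X i) (hmem X i), F.map_comp]
      simp
    rw [Finset.sum_congr rfl hterm, ← F.map_sum, hsum, F.map_id]
  -- the natural isomorphism θ
  let θ : F ≅ 𝟭 T := NatIso.ofComponents (fun X => ⟨θa X, ψ X, inv1 X, inv2 X⟩)
    (fun f => by simpa using nat f)
  have θhomapp : ∀ X, θ.hom.app X = θa X := fun X => rfl
  -- the natural isomorphism ω'
  let ω' : shiftFunctor T (1 : ℤ) ≅ shiftFunctor T (1 : ℤ) :=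
    (Functor.isoWhiskerLeft (shiftFunctor T (1 : ℤ)) θ ≪≫
      Functor.rightUnitor _).symm ≪≫ ω ≪≫
      (Functor.isoWhiskerRight θ (shiftFunctor T (1 : ℤ)) ≪≫ Functor.leftUnitor _)
  have hω'app : ∀ X : T, ω'.hom.app X =
      θ.inv.app ((shiftFunctor T (1 : ℤ)).obj X) ≫ ω.hom.app X ≫
        (shiftFunctor T (1 : ℤ)).map (θ.hom.app X) := by
    intro X
    simp [ω']
  have hcompat : ∀ X : T, θ.hom.app ((shiftFunctor T (1 : ℤ)).obj X) ≫
      ω'.hom.app X = ω.hom.app X ≫ (shiftFunctor T (1 : ℤ)).map (θ.hom.app X) := by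
    intro X
    rw [hω'app]
    simp
  refine ⟨⟨ω', θ⟩, ⟨?_, hcompat, ?_⟩, ?_⟩
  · -- identity is a triangle functor with ω'
    intro Tr hTr
    refine isomorphic_distinguished _ (hF Tr hTr) _ ?_
    refine Triangle.isoMk _ _ (θ.symm.app Tr.obj₁)
      (θ.symm.app Tr.obj₂) (θ.symm.app Tr.obj₃) ?_ ?_ ?_
    · exact θ.inv.naturality Tr.mor₁
    · exact θ.inv.naturality Tr.mor₂
    · have hn : Tr.mor₃ ≫ θ.inv.app ((shiftFunctor T (1 : ℤ)).obj Tr.obj₁) =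
          θ.inv.app Tr.obj₃ ≫ F.map Tr.mor₃ := by
        simpa using θ.inv.naturality Tr.mor₃
      change (Tr.mor₃ ≫ 𝟙 _ ≫ ω'.hom.app Tr.obj₁ ≫ 𝟙 _) ≫ (shiftFunctor T (1 : ℤ)).map (θ.inv.app Tr.obj₁) =
        θ.inv.app Tr.obj₃ ≫ F.map Tr.mor₃ ≫ ω.hom.app Tr.obj₁
      rw [hω'app]
      simp only [Category.assoc, Category.comp_id, Category.id_comp,
        ← Functor.map_comp, Iso.hom_inv_id_app, Functor.map_id]
      rw [← Category.assoc Tr.mor₃, hn]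
      simp
  · -- θ_S = id on obj(M)
    intro S hS
    rw [θhomapp, θobj S hS]
  · -- uniqueness
    rintro ⟨ω₁, θ₁⟩ ⟨-, hq2, hq3⟩
    have hθeq : θ₁ = θ := by
      apply Iso.ext
      apply NatTrans.ext
      funext X
      have h1 : θ₁.hom.app X = ∑ i, F.map (π X i) ≫ F.map (ι X i) ≫ θ₁.hom.app X := by
        conv_lhs => rw [← Category.id_comp (θ₁.hom.app X), ← F.map_id,
          ← hsum X, F.map_sum, Preadditive.sum_comp]
        refine Finset.sum_congr rfl fun i _ => ?_
        rw [F.map_comp, Category.assoc]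
      rw [h1]
      have hterm : ∀ i ∈ Finset.univ, F.map (π X i) ≫ F.map (ι X i) ≫ θ₁.hom.app X =
          F.map (π X i) ≫ eqToHom (hobj (s X i) (hmem X i)) ≫ ι X i := by
        intro i _
        rw [θ₁.hom.naturality (ι X i), hq3 (s X i) (hmem X i)]
        rfl
      rw [Finset.sum_congr rfl hterm]
      rfl
    have hωeq : ω₁ = ω' := by
      apply Iso.ext
      apply NatTrans.ext
      funext X
      have h2 := hq2 X
      rw [hθeq] at h2
      have h3 := hcompat X
      rw [← h3] at h2
      exact (cancel_epi (θ.hom.app ((shiftFunctor T (1 : ℤ)).obj X))).mp h2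
    rw [hθeq, hωeq]
end

section
/- Let X --f--> Y --g--> Z --h--> Σ(X) be an exact triangle in T with g ≠ 0 and h ≠ 0, and assume that End_T(Z) equals k·Id_Z, or equals k·Id_Z ⊕ k·Δ where Δ is an almost-vanishing endomorphism of Z. Then for a nonzero scalar λ ∈ k, the triangle X --f--> Y --g--> Z --(λh)--> Σ(X) is exact if and only if λ = 1. -/
/-!
STATEMENT 3: Let X --f--> Y --g--> Z --h--> Σ(X) be an exact triangle in T with g ≠ 0 and
h ≠ 0, and assume that End_T(Z) equals k·Id_Z, or equals k·Id_Z ⊕ k·Δ where Δ is an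
almost-vanishing endomorphism of Z. Then for a nonzero scalar λ ∈ k, the triangle
X --f--> Y --g--> Z --(λh)--> Σ(X) is exact if and only if λ = 1.
-/

open CategoryTheory Limits Pretriangulated

/-- A nonzero non-invertible endomorphism `Δ : X ⟶ X` is almost-vanishing if `Δ ∘ f = 0`
for every non-retraction `f : Y ⟶ X` and `g ∘ Δ = 0` for every non-section `g : X ⟶ Z`. -/
def AlmostVanishing {T : Type*} [Category T] [Preadditive T] {X : T} (Δ : X ⟶ X) : Prop :=
  Δ ≠ 0 ∧ ¬ IsIso Δ ∧
  (∀ (Y : T) (f : Y ⟶ X), ¬ IsSplitEpi f → f ≫ Δ = 0) ∧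
  (∀ (Z : T) (g : X ⟶ Z), ¬ IsSplitMono g → Δ ≫ g = 0)

theorem stmt_3 {k : Type*} [Field k] {T : Type*} [Category T] [Preadditive T] [Linear k T]
    [HasZeroObject T] [HasShift T ℤ] [∀ n : ℤ, (shiftFunctor T n).Additive]
    [Pretriangulated T] [HasBinaryBiproducts T]
    -- Hom-finite and Krull–Schmidt:
    (hfin : ∀ X Y : T, FiniteDimensional k (X ⟶ Y)) [IsIdempotentComplete T]
    {X Y Z : T} (f : X ⟶ Y) (g : Y ⟶ Z) (h : Z ⟶ X⟦(1 : ℤ)⟧)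
    (hdist : Triangle.mk f g h ∈ distTriang T) (hg : g ≠ 0) (hh : h ≠ 0)
    (hEnd : (∀ u : Z ⟶ Z, ∃ c : k, u = c • 𝟙 Z) ∨
      (∃ Δ : Z ⟶ Z, AlmostVanishing Δ ∧ ∀ u : Z ⟶ Z, ∃ c d : k, u = c • 𝟙 Z + d • Δ))
    (lam : k) (hlam : lam ≠ 0) :
    (Triangle.mk f g (lam • h) ∈ distTriang T) ↔ lam = 1 := by
  constructor
  · intro hdist'
    obtain ⟨c, hc1, hc2⟩ : ∃ c : Z ⟶ Z, g ≫ c = 𝟙 Y ≫ g ∧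
        h ≫ (shiftFunctor T 1).map (𝟙 X) = c ≫ (lam • h) := complete_distinguished_triangle_morphism
      (Triangle.mk f g h) (Triangle.mk f g (lam • h)) hdist hdist' (𝟙 X) (𝟙 Y)
      (by exact (Category.comp_id f).trans (Category.id_comp f).symm)
    simp only [Triangle.mk_obj₂, Triangle.mk_obj₃, Triangle.mk_mor₂, Triangle.mk_mor₁,
      Triangle.mk_mor₃, Triangle.mk_obj₁, Functor.map_id, Category.id_comp,
      Category.comp_id] at hc1 hc2
    -- hc1 : g ≫ c = g, hc2 : h = c ≫ (lam • h)
    have hzero : g ≫ h = 0 := comp_distTriang_mor_zero₂₃ _ hdist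
    have hge : ¬ IsSplitEpi g := by
      intro hs
      exact hh (by rw [← Category.id_comp h, ← hs.exists_splitEpi.some.id, Category.assoc,
        hzero, comp_zero])
    have hhm : ¬ IsSplitMono h := by
      intro hs
      exact hg (by rw [← Category.comp_id g, ← hs.exists_splitMono.some.id, ← Category.assoc,
        hzero, zero_comp])
    have hc2' : h = lam • (c ≫ h) := by
      rw [← Linear.comp_smul, ← hc2, CategoryTheory.Functor.map_id, Category.comp_id]
    have key : ∀ e : k, g ≫ c = e • g → c ≫ h = e • h → lam = 1 := by
      intro e he1 he2
      have he : e = 1 := by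
        have h0 : (e - 1) • g = 0 := by rw [sub_smul, one_smul, ← he1, hc1, sub_self]
        rcases smul_eq_zero.mp h0 with h' | h'
        · exact sub_eq_zero.mp h'
        · exact absurd h' hg
      rw [he2, he, one_smul] at hc2'
      have h0 : (lam - 1) • h = 0 := by rw [sub_smul, one_smul, ← hc2', sub_self]
      rcases smul_eq_zero.mp h0 with h' | h'
      · exact sub_eq_zero.mp h'
      · exact absurd h' hh
    rcases hEnd with H | ⟨Δ, hΔ, H⟩
    · obtain ⟨e, he⟩ := H c
      exact key e (by simp [he]) (by simp [he])
    · obtain ⟨e, d, he⟩ := H c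
      have h1 : g ≫ Δ = 0 := hΔ.2.2.1 Y g hge
      have h2 : Δ ≫ h = 0 := hΔ.2.2.2 _ h hhm
      exact key e (by simp [he, h1]) (by simp [he, h2])
  · rintro rfl
    simpa using hdist
end

section
/- Let A be a k-linear additive category and let (F, ω) be a pseudo-identity on K^b(A). Then there exists a normalized pseudo-identity (F′, ω′) on K^b(A) together with an isomorphism of triangle functors δ: (F, ω) → (F′, ω′). -/
open CategoryTheory Limits Pretriangulated

section Kb

variable {k : Type*} [Field k]
variable (V : Type*) [Category V] [Preadditive V] [Linear k V]
  [HasZeroObject V] [HasBinaryBiproducts V]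

/-- A cochain complex is bounded. -/
def IsBoundedComplex (C : CochainComplex V ℤ) : Prop :=
  ∃ a b : ℤ, ∀ n : ℤ, (n < a ∨ b < n) → IsZero (C.X n)

/-- An object of the homotopy category `K(V)` belongs to the bounded homotopy
category `K^b(V)` if it is isomorphic to a bounded complex. -/
def InKb (X : HomotopyCategory V (ComplexShape.up ℤ)) : Prop :=
  ∃ C : CochainComplex V ℤ, IsBoundedComplex V C ∧
    Nonempty (X ≅ (HomotopyCategory.quotient V (ComplexShape.up ℤ)).obj C)

/-- The bounded homotopy category `K^b(V)`, as the full subcategory of the homotopy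
category on bounded complexes. -/
def Kb := ObjectProperty.FullSubcategory (InKb V)

instance : Category (Kb V) := ObjectProperty.FullSubcategory.category _
instance : Preadditive (Kb V) := Preadditive.fullSubcategory _
instance : Linear k (Kb V) := Linear.fullSubcategory _

/-- The suspension functor `Σ` of `K^b(V)`, induced by the shift of the homotopy
category. -/
noncomputable def SuspKb : Kb V ⥤ Kb V where
  obj X := ⟨X.obj⟦(1 : ℤ)⟧, by
    obtain ⟨C, ⟨a, b, hC⟩, ⟨e⟩⟩ := X.2
    refine ⟨C⟦(1 : ℤ)⟧, ⟨a - 1, b - 1, fun n hn => ?_⟩, ⟨((shiftFunctor _ (1 : ℤ)).mapIso e) ≪≫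
      (((HomotopyCategory.quotient V (ComplexShape.up ℤ)).commShiftIso (1 : ℤ)).app C).symm⟩⟩
    exact hC (n + 1) (by omega)⟩
  map f := ObjectProperty.homMk ((shiftFunctor (HomotopyCategory V (ComplexShape.up ℤ)) (1 : ℤ)).map f.hom)
  map_id X := ObjectProperty.hom_ext _ ((shiftFunctor (HomotopyCategory V (ComplexShape.up ℤ)) (1 : ℤ)).map_id X.obj)
  map_comp f g := ObjectProperty.hom_ext _ ((shiftFunctor (HomotopyCategory V (ComplexShape.up ℤ)) (1 : ℤ)).map_comp f.hom g.hom)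

/-- A triangle in `K^b(V)` is exact if it is a distinguished triangle of the ambient
homotopy category. -/
def ExactKb {X Y Z : Kb V} (f : X ⟶ Y) (g : Y ⟶ Z) (h : Z ⟶ (SuspKb V).obj X) : Prop :=
  (Triangle.mk (show X.obj ⟶ Y.obj from f.hom) (show Y.obj ⟶ Z.obj from g.hom)
    (show Z.obj ⟶ X.obj⟦(1 : ℤ)⟧ from h.hom)) ∈
    distTriang (HomotopyCategory V (ComplexShape.up ℤ))

/-- The object of `K^b(V)` is a stalk complex concentrated in degree `-n`,
i.e. belongs to `Σⁿ(V)`. -/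
def IsStalkKb (n : ℤ) (X : Kb V) : Prop :=
  ∀ m : ℤ, m ≠ -n → IsZero ((X.obj.as).X m)

variable (k) in
/-- A pseudo-identity on `K^b(V)`: a k-linear triangle endofunctor `(F, ω)` such that
`F(X) = X` for every complex `X` and the restriction of `F` to each `Σⁿ(V)` is the
identity functor. -/
structure IsPseudoIdentity (F : Kb V ⥤ Kb V)
    (ω : SuspKb V ⋙ F ≅ F ⋙ SuspKb V) : Prop where
  additive : F.Additive
  linear : F.Linear k
  obj_eq : ∀ X : Kb V, F.obj X = X
  map_stalk : ∀ (n : ℤ) (X Y : Kb V), IsStalkKb V n X → IsStalkKb V n Y →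
    ∀ f : X ⟶ Y, F.map f = eqToHom (obj_eq X) ≫ f ≫ eqToHom (obj_eq Y).symm
  exact : ∀ (X Y Z : Kb V) (f : X ⟶ Y) (g : Y ⟶ Z) (h : Z ⟶ (SuspKb V).obj X),
    ExactKb V f g h → ExactKb V (F.map f) (F.map g) (F.map h ≫ ω.hom.app X)

/-- A pseudo-identity `(F, ω)` is normalized if `ω_X` is the identity for every stalk
complex `X`. -/
def IsNormalizedPseudoIdentity (F : Kb V ⥤ Kb V)
    (ω : SuspKb V ⋙ F ≅ F ⋙ SuspKb V) : Prop :=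
  ∀ (n : ℤ) (X : Kb V), IsStalkKb V n X →
    ∃ e : F.obj ((SuspKb V).obj X) = (SuspKb V).obj (F.obj X), ω.hom.app X = eqToHom e

end Kb


section Aux

open CategoryTheory Limits Pretriangulated

variable {k : Type*} [Field k]
variable {V : Type*} [Category V] [Preadditive V] [Linear k V]
  [HasZeroObject V] [HasBinaryBiproducts V]

local notation "KH" => HomotopyCategory V (ComplexShape.up ℤ)

unseal CategoryTheory.HasShift.quotient in
lemma Kbshift_as (X : KH) (n : ℤ) : ((X⟦n⟧).as) = (X.as)⟦n⟧ := rfl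

lemma isStalkKb_of_eq {n m : ℤ} (h : n = m) {X : Kb V} (hX : IsStalkKb V n X) :
    IsStalkKb V m X := h ▸ hX

lemma isStalkKb_susp {n : ℤ} {X : Kb V} (h : IsStalkKb V n X) :
    IsStalkKb V (n + 1) ((SuspKb V).obj X) := by
  intro m hm
  show IsZero (((X.obj⟦(1:ℤ)⟧).as).X m)
  rw [Kbshift_as]
  exact h (m + 1) (by omega)

/-- The desuspension of an object of `K^b(V)`. -/
noncomputable def UnsuspKb (Y : Kb V) : Kb V :=
  ⟨Y.obj⟦(-1 : ℤ)⟧, by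
    obtain ⟨C, ⟨a, b, hC⟩, ⟨e⟩⟩ := Y.2
    refine ⟨C⟦(-1 : ℤ)⟧, ⟨a + 1, b + 1, fun n hn => ?_⟩, ⟨((shiftFunctor _ ((-1) : ℤ)).mapIso e) ≪≫
      (((HomotopyCategory.quotient V (ComplexShape.up ℤ)).commShiftIso ((-1) : ℤ)).app C).symm⟩⟩
    exact hC (n + (-1)) (by omega)⟩

lemma isStalkKb_unsusp {n : ℤ} {Y : Kb V} (h : IsStalkKb V (n + 1) Y) :
    IsStalkKb V n (UnsuspKb Y) := by
  intro m hm
  show IsZero (((Y.obj⟦(-1:ℤ)⟧).as).X m)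
  rw [Kbshift_as]
  exact h (m + (-1)) (by omega)

/-- Build an isomorphism in `Kb` from one of the underlying homotopy category. -/
def isoKb {X Y : Kb V} (e : X.obj ≅ Y.obj) : X ≅ Y where
  hom := ObjectProperty.homMk e.hom
  inv := ObjectProperty.homMk e.inv
  hom_inv_id := ObjectProperty.hom_ext _ e.hom_inv_id
  inv_hom_id := ObjectProperty.hom_ext _ e.inv_hom_id

/-- The counit isomorphism `Σ Σ⁻¹ Y ≅ Y`. -/
noncomputable def epsKb (Y : Kb V) : (SuspKb V).obj (UnsuspKb Y) ≅ Y :=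
  isoKb ((shiftFunctorCompIsoId KH (-1) 1 (by omega)).app Y.obj)

/-- The unit-type isomorphism `Σ⁻¹ Σ X ≅ X`. -/
noncomputable def phiKb (X : Kb V) : UnsuspKb ((SuspKb V).obj X) ≅ X :=
  isoKb ((shiftFunctorCompIsoId KH 1 (-1) (by omega)).app X.obj)

lemma susp_phiKb_hom (X : Kb V) :
    (SuspKb V).map (phiKb X).hom = (epsKb ((SuspKb V).obj X)).hom :=
  ObjectProperty.hom_ext _ (CategoryTheory.shift_shiftFunctorCompIsoId_hom_app 1 (-1) (by omega) X.obj)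

lemma susp_phiKb_inv (X : Kb V) :
    (SuspKb V).map (phiKb X).inv = (epsKb ((SuspKb V).obj X)).inv :=
  ObjectProperty.hom_ext _ (CategoryTheory.shift_shiftFunctorCompIsoId_inv_app 1 (-1) (by omega) X.obj)

lemma epsKb_natural {X Y : Kb V} (f : X ⟶ Y) :
    (SuspKb V).map (ObjectProperty.homMk ((shiftFunctor KH (-1)).map f.hom) :
        (UnsuspKb X ⟶ UnsuspKb Y)) ≫ (epsKb Y).hom = (epsKb X).hom ≫ f :=
  ObjectProperty.hom_ext _ ((shiftFunctorCompIsoId KH (-1) 1 (by omega)).hom.naturality f.hom)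

end Aux
section Aux2

open CategoryTheory Limits Pretriangulated

set_option linter.unusedSectionVars false

variable {k : Type*} [Field k]
variable {V : Type*} [Category V] [Preadditive V] [Linear k V]
  [HasZeroObject V] [HasBinaryBiproducts V]

local notation "KH" => HomotopyCategory V (ComplexShape.up ℤ)

variable (F : Kb V ⥤ Kb V) (ω : SuspKb V ⋙ F ≅ F ⋙ SuspKb V)
  (hF : IsPseudoIdentity k V F ω)

/-- `ω` with the identifications `F X = X` inserted, as an automorphism of `Σ X`. -/
noncomputable def omt (X : Kb V) : (SuspKb V).obj X ⟶ (SuspKb V).obj X :=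
  eqToHom (hF.obj_eq ((SuspKb V).obj X)).symm ≫ ω.hom.app X ≫
    eqToHom (congrArg (SuspKb V).obj (hF.obj_eq X))

lemma omt_isIso (X : Kb V) : IsIso (omt F ω hF X) := by
  unfold omt
  infer_instance

lemma omt_natural {n : ℤ} {X Y : Kb V} (hX : IsStalkKb V n X) (hY : IsStalkKb V n Y)
    (f : X ⟶ Y) :
    omt F ω hF X ≫ (SuspKb V).map f = (SuspKb V).map f ≫ omt F ω hF Y := by
  have h1 := ω.hom.naturality f
  have h2 : F.map ((SuspKb V).map f) =
      eqToHom (hF.obj_eq _) ≫ (SuspKb V).map f ≫ eqToHom (hF.obj_eq _).symm :=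
    hF.map_stalk (n + 1) _ _ (isStalkKb_susp hX) (isStalkKb_susp hY) _
  have h3 : F.map f = eqToHom (hF.obj_eq _) ≫ f ≫ eqToHom (hF.obj_eq _).symm :=
    hF.map_stalk n _ _ hX hY _
  simp only [Functor.comp_map] at h1
  rw [h2, h3] at h1
  simp only [Functor.map_comp, eqToHom_map, Category.assoc] at h1
  unfold omt
  rw [← cancel_epi (eqToHom (hF.obj_eq ((SuspKb V).obj X))),
    ← cancel_mono (eqToHom (congrArg (SuspKb V).obj (hF.obj_eq Y)).symm)]
  simp only [Category.assoc, eqToHom_trans, eqToHom_refl, Category.comp_id,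
    Category.id_comp, eqToHom_trans_assoc]
  exact h1.symm

end Aux2
section Aux3

open CategoryTheory Limits Pretriangulated

set_option linter.unusedSectionVars false

variable {k : Type*} [Field k]
variable {V : Type*} [Category V] [Preadditive V] [Linear k V]
  [HasZeroObject V] [HasBinaryBiproducts V]

local notation "KH" => HomotopyCategory V (ComplexShape.up ℤ)

variable (F : Kb V ⥤ Kb V) (ω : SuspKb V ⋙ F ≅ F ⋙ SuspKb V)
  (hF : IsPseudoIdentity k V F ω)

lemma suspKb_map {X Y : Kb V} (f : X ⟶ Y) :
    (SuspKb V).map f = ObjectProperty.homMk ((shiftFunctor KH (1:ℤ)).map f.hom) := rfl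

lemma omt_natural_inv {n : ℤ} {X Y : Kb V} (hX : IsStalkKb V n X) (hY : IsStalkKb V n Y)
    (f : X ⟶ Y) :
    letI := omt_isIso F ω hF X
    letI := omt_isIso F ω hF Y
    inv (omt F ω hF X) ≫ (SuspKb V).map f = (SuspKb V).map f ≫ inv (omt F ω hF Y) := by
  letI := omt_isIso F ω hF X
  letI := omt_isIso F ω hF Y
  rw [IsIso.inv_comp_eq, ← Category.assoc, omt_natural F ω hF hX hY f, Category.assoc,
    IsIso.hom_inv_id, Category.comp_id]

/-- The normalizing automorphisms in nonnegative degrees. -/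
noncomputable def tpos : (j : ℕ) → (Y : Kb V) → IsStalkKb V (j : ℤ) Y → (Y ⟶ Y)
  | 0, _, _ => 𝟙 _
  | (j+1), Y, hY =>
      (epsKb Y).inv ≫ (omt F ω hF (UnsuspKb Y) ≫
        (SuspKb V).map (tpos j (UnsuspKb Y)
          (isStalkKb_unsusp (isStalkKb_of_eq (by push_cast; ring) hY)))) ≫ (epsKb Y).hom

/-- The normalizing automorphisms in nonpositive degrees. -/
noncomputable def tneg : (j : ℕ) → (Y : Kb V) → IsStalkKb V (-(j : ℤ)) Y → (Y ⟶ Y)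
  | 0, _, _ => 𝟙 _
  | (j+1), Y, hY =>
      letI := omt_isIso F ω hF Y
      ObjectProperty.homMk ((shiftFunctor KH (1:ℤ)).preimage
        ((inv (omt F ω hF Y) ≫ tneg j ((SuspKb V).obj Y)
          (isStalkKb_of_eq (by push_cast; ring) (isStalkKb_susp hY)) :
            (SuspKb V).obj Y ⟶ (SuspKb V).obj Y).hom))

lemma tpos_congr {j j' : ℕ} (h : j = j') (Y : Kb V) (hY : IsStalkKb V (j : ℤ) Y)
    (hY' : IsStalkKb V (j' : ℤ) Y) : tpos F ω hF j Y hY = tpos F ω hF j' Y hY' := by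
  subst h; rfl

lemma tneg_congr {j j' : ℕ} (h : j = j') (Y : Kb V) (hY : IsStalkKb V (-(j : ℤ)) Y)
    (hY' : IsStalkKb V (-(j' : ℤ)) Y) : tneg F ω hF j Y hY = tneg F ω hF j' Y hY' := by
  subst h; rfl

lemma tpos_isIso : ∀ (j : ℕ) (Y : Kb V) (hY : IsStalkKb V (j : ℤ) Y),
    IsIso (tpos F ω hF j Y hY)
  | 0, Y, hY => by simp only [tpos]; infer_instance
  | (j+1), Y, hY => by
      haveI := omt_isIso F ω hF (UnsuspKb Y)
      haveI := tpos_isIso j (UnsuspKb Y) (isStalkKb_unsusp (isStalkKb_of_eq (by push_cast; ring) hY))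
      simp only [tpos]
      infer_instance

lemma isIso_Kb_of_H {X Y : Kb V} (f : X ⟶ Y)
    (h : IsIso (C := KH) f.hom) : IsIso f := by
  obtain ⟨g, h1, h2⟩ := h
  exact ⟨ObjectProperty.homMk g, ObjectProperty.hom_ext _ h1, ObjectProperty.hom_ext _ h2⟩

lemma isIso_H_of_Kb {X Y : Kb V} (f : X ⟶ Y) (h : IsIso f) :
    IsIso (C := KH) f.hom := by
  obtain ⟨g, h1, h2⟩ := h
  exact ⟨g.hom, congrArg InducedCategory.Hom.hom h1, congrArg InducedCategory.Hom.hom h2⟩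

lemma preimage_isIso {X Y : KH} (u : (shiftFunctor KH (1:ℤ)).obj X ⟶ (shiftFunctor KH (1:ℤ)).obj Y)
    (hu : IsIso u) : IsIso ((shiftFunctor KH (1:ℤ)).preimage u) := by
  haveI : IsIso ((shiftFunctor KH (1:ℤ)).map ((shiftFunctor KH (1:ℤ)).preimage u)) := by
    rw [Functor.map_preimage]; exact hu
  exact isIso_of_reflects_iso _ (shiftFunctor KH (1:ℤ))

lemma tneg_isIso : ∀ (j : ℕ) (Y : Kb V) (hY : IsStalkKb V (-(j : ℤ)) Y),
    IsIso (tneg F ω hF j Y hY)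
  | 0, Y, hY => by simp only [tneg]; infer_instance
  | (j+1), Y, hY => by
      haveI := omt_isIso F ω hF Y
      haveI := tneg_isIso j ((SuspKb V).obj Y)
        (isStalkKb_of_eq (by push_cast; ring) (isStalkKb_susp hY))
      have hu : IsIso ((inv (omt F ω hF Y) ≫ tneg F ω hF j ((SuspKb V).obj Y)
          (isStalkKb_of_eq (by push_cast; ring) (isStalkKb_susp hY)) :
            (SuspKb V).obj Y ⟶ (SuspKb V).obj Y)) := inferInstance
      simp only [tneg]
      exact isIso_Kb_of_H _ (preimage_isIso _ (isIso_H_of_Kb _ hu))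

end Aux3
section Aux4

open CategoryTheory Limits Pretriangulated

set_option linter.unusedSectionVars false

variable {k : Type*} [Field k]
variable {V : Type*} [Category V] [Preadditive V] [Linear k V]
  [HasZeroObject V] [HasBinaryBiproducts V]

local notation "KH" => HomotopyCategory V (ComplexShape.up ℤ)

variable (F : Kb V ⥤ Kb V) (ω : SuspKb V ⋙ F ≅ F ⋙ SuspKb V)
  (hF : IsPseudoIdentity k V F ω)

lemma Kb_comp_eq {X Y Z : Kb V} (f : X ⟶ Y) (g : Y ⟶ Z) :
    (f ≫ g : X ⟶ Z).hom =
      f.hom ≫ g.hom := rfl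

lemma tpos_natural : ∀ (j : ℕ) {X Y : Kb V} (hX : IsStalkKb V (j : ℤ) X)
    (hY : IsStalkKb V (j : ℤ) Y) (f : X ⟶ Y),
    tpos F ω hF j X hX ≫ f = f ≫ tpos F ω hF j Y hY
  | 0, X, Y, hX, hY, f => by simp [tpos]
  | (j+1), X, Y, hX, hY, f => by
      set g : UnsuspKb X ⟶ UnsuspKb Y :=
        (ObjectProperty.homMk ((shiftFunctor KH (-1)).map f.hom) : UnsuspKb X ⟶ UnsuspKb Y) with hg
      have hXu : IsStalkKb V (j : ℤ) (UnsuspKb X) :=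
        isStalkKb_unsusp (isStalkKb_of_eq (by push_cast; ring) hX)
      have hYu : IsStalkKb V (j : ℤ) (UnsuspKb Y) :=
        isStalkKb_unsusp (isStalkKb_of_eq (by push_cast; ring) hY)
      have key : omt F ω hF (UnsuspKb X) ≫ (SuspKb V).map (tpos F ω hF j (UnsuspKb X) hXu) ≫
          (SuspKb V).map g =
          (SuspKb V).map g ≫
            omt F ω hF (UnsuspKb Y) ≫ (SuspKb V).map (tpos F ω hF j (UnsuspKb Y) hYu) := by
        rw [← Functor.map_comp, tpos_natural j hXu hYu g, Functor.map_comp,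
          ← Category.assoc, omt_natural F ω hF hXu hYu g, Category.assoc]
      have e1 : (epsKb X).hom ≫ f = (SuspKb V).map g ≫ (epsKb Y).hom := (epsKb_natural f).symm
      have e2 : (epsKb X).inv ≫ (SuspKb V).map g = f ≫ (epsKb Y).inv := by
        rw [Iso.eq_comp_inv, Category.assoc, ← e1, Iso.inv_hom_id_assoc]
      simp only [tpos, Category.assoc]
      rw [e1, reassoc_of% key, reassoc_of% e2]

lemma tneg_natural : ∀ (j : ℕ) {X Y : Kb V} (hX : IsStalkKb V (-(j : ℤ)) X)
    (hY : IsStalkKb V (-(j : ℤ)) Y) (f : X ⟶ Y),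
    tneg F ω hF j X hX ≫ f = f ≫ tneg F ω hF j Y hY
  | 0, X, Y, hX, hY, f => by simp [tneg]
  | (j+1), X, Y, hX, hY, f => by
      haveI := omt_isIso F ω hF X
      haveI := omt_isIso F ω hF Y
      have hXs : IsStalkKb V (-(j:ℤ)) ((SuspKb V).obj X) :=
        isStalkKb_of_eq (by push_cast; ring) (isStalkKb_susp hX)
      have hYs : IsStalkKb V (-(j:ℤ)) ((SuspKb V).obj Y) :=
        isStalkKb_of_eq (by push_cast; ring) (isStalkKb_susp hY)
      apply ObjectProperty.hom_ext
      apply (shiftFunctor KH (1:ℤ)).map_injective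
      show (shiftFunctor KH (1:ℤ)).map
          ((tneg F ω hF (j+1) X hX).hom ≫ f.hom) =
        (shiftFunctor KH (1:ℤ)).map
          (f.hom ≫ (tneg F ω hF (j+1) Y hY).hom)
      rw [Functor.map_comp, Functor.map_comp]
      have lhs : (shiftFunctor KH (1:ℤ)).map
            (tneg F ω hF (j+1) X hX : X ⟶ X).hom =
          (inv (omt F ω hF X) ≫ tneg F ω hF j ((SuspKb V).obj X) hXs :
            (SuspKb V).obj X ⟶ (SuspKb V).obj X).hom := by
        simp only [tneg]
        exact Functor.map_preimage _ _
      have rhs : (shiftFunctor KH (1:ℤ)).map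
            (tneg F ω hF (j+1) Y hY : Y ⟶ Y).hom =
          (inv (omt F ω hF Y) ≫ tneg F ω hF j ((SuspKb V).obj Y) hYs :
            (SuspKb V).obj Y ⟶ (SuspKb V).obj Y).hom := by
        simp only [tneg]
        exact Functor.map_preimage _ _
      rw [lhs, rhs]
      show ((inv (omt F ω hF X) ≫ tneg F ω hF j ((SuspKb V).obj X) hXs) ≫ (SuspKb V).map f).hom =
        ((SuspKb V).map f ≫ inv (omt F ω hF Y) ≫ tneg F ω hF j ((SuspKb V).obj Y) hYs).hom
      congr 1
      rw [Category.assoc, tneg_natural j hXs hYs ((SuspKb V).map f), ← Category.assoc,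
        omt_natural_inv F ω hF hX hY f, Category.assoc]

lemma tpos_susp (j : ℕ) (X : Kb V) (hX : IsStalkKb V (j : ℤ) X)
    (h' : IsStalkKb V ((j+1 : ℕ) : ℤ) ((SuspKb V).obj X)) :
    tpos F ω hF (j+1) ((SuspKb V).obj X) h' =
      omt F ω hF X ≫ (SuspKb V).map (tpos F ω hF j X hX) := by
  have hu : IsStalkKb V (j : ℤ) (UnsuspKb ((SuspKb V).obj X)) :=
    isStalkKb_unsusp (isStalkKb_of_eq (by push_cast; ring) h')
  have key : omt F ω hF (UnsuspKb ((SuspKb V).obj X)) ≫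
        (SuspKb V).map (tpos F ω hF j (UnsuspKb ((SuspKb V).obj X)) hu) ≫
        (SuspKb V).map (phiKb X).hom =
      (SuspKb V).map (phiKb X).hom ≫
        omt F ω hF X ≫ (SuspKb V).map (tpos F ω hF j X hX) := by
    rw [← Functor.map_comp, tpos_natural F ω hF j hu hX (phiKb X).hom,
      Functor.map_comp, ← Category.assoc, omt_natural F ω hF hu hX (phiKb X).hom,
      Category.assoc]
  simp only [tpos, Category.assoc]
  rw [← susp_phiKb_hom, ← susp_phiKb_inv, key, ← Functor.map_comp_assoc,
    Iso.inv_hom_id, (SuspKb V).map_id, Category.id_comp]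

lemma tneg_susp (j : ℕ) (X : Kb V) (h' : IsStalkKb V (-(j:ℤ)) ((SuspKb V).obj X))
    (hX : IsStalkKb V (-((j+1 : ℕ) : ℤ)) X) :
    tneg F ω hF j ((SuspKb V).obj X) h' =
      omt F ω hF X ≫ (SuspKb V).map (tneg F ω hF (j+1) X hX) := by
  haveI := omt_isIso F ω hF X
  have key : (SuspKb V).map (tneg F ω hF (j+1) X hX) =
      (inv (omt F ω hF X) ≫ tneg F ω hF j ((SuspKb V).obj X)
        (isStalkKb_of_eq (by push_cast; ring) (isStalkKb_susp hX)) :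
          (SuspKb V).obj X ⟶ (SuspKb V).obj X) := by
    rw [suspKb_map]
    apply ObjectProperty.hom_ext
    simp only [tneg]
    exact Functor.map_preimage _ _
  rw [key, IsIso.hom_inv_id_assoc]

end Aux4
section Aux5

open CategoryTheory Limits Pretriangulated

set_option linter.unusedSectionVars false

variable {k : Type*} [Field k]
variable {V : Type*} [Category V] [Preadditive V] [Linear k V]
  [HasZeroObject V] [HasBinaryBiproducts V]

local notation "KH" => HomotopyCategory V (ComplexShape.up ℤ)

variable (F : Kb V ⥤ Kb V) (ω : SuspKb V ⋙ F ≅ F ⋙ SuspKb V)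
  (hF : IsPseudoIdentity k V F ω)

/-- The normalizing automorphism for a stalk complex, in all degrees. -/
noncomputable def tt (X : Kb V) (n : ℤ) (h : IsStalkKb V n X) : X ⟶ X :=
  if hn : 0 ≤ n then tpos F ω hF n.toNat X (isStalkKb_of_eq (by omega) h)
  else tneg F ω hF (-n).toNat X (isStalkKb_of_eq (by omega) h)

lemma tt_isIso (X : Kb V) (n : ℤ) (h : IsStalkKb V n X) : IsIso (tt F ω hF X n h) := by
  unfold tt
  split_ifs with hn
  · exact tpos_isIso F ω hF _ _ _
  · exact tneg_isIso F ω hF _ _ _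

lemma tt_natural {n : ℤ} {X Y : Kb V} (hX : IsStalkKb V n X) (hY : IsStalkKb V n Y)
    (f : X ⟶ Y) : tt F ω hF X n hX ≫ f = f ≫ tt F ω hF Y n hY := by
  unfold tt
  split_ifs with hn
  · exact tpos_natural F ω hF _ _ _ f
  · exact tneg_natural F ω hF _ _ _ f

lemma tt_susp {n : ℤ} {X : Kb V} (h : IsStalkKb V n X)
    (hs : IsStalkKb V (n + 1) ((SuspKb V).obj X)) :
    tt F ω hF ((SuspKb V).obj X) (n+1) hs = omt F ω hF X ≫ (SuspKb V).map (tt F ω hF X n h) := by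
  rcases lt_trichotomy n (-1) with hn | hn | hn
  · -- n < -1, both negative
    have h1 : ¬ (0 ≤ n + 1) := by omega
    have h2 : ¬ (0 ≤ n) := by omega
    unfold tt
    rw [dif_neg h1, dif_neg h2]
    rw [tneg_congr F ω hF (show (-(n+1)).toNat = (-(n+1)).toNat from rfl) _ _
      (isStalkKb_of_eq (by omega) hs)]
    rw [tneg_congr F ω hF (show (-n).toNat = (-(n+1)).toNat + 1 by omega) X _
      (isStalkKb_of_eq (by omega) h)]
    exact tneg_susp F ω hF (-(n+1)).toNat X _ _
  · -- n = -1
    subst hn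
    have h1 : (0:ℤ) ≤ (-1) + 1 := by omega
    have h2 : ¬ (0 ≤ (-1:ℤ)) := by omega
    unfold tt
    rw [dif_pos h1, dif_neg h2]
    rw [tpos_congr F ω hF (show ((-1:ℤ)+1).toNat = 0 by omega) _ _
      (isStalkKb_of_eq (by omega) hs)]
    rw [tneg_congr F ω hF (show (-(-1:ℤ)).toNat = 0 + 1 by omega) X _
      (isStalkKb_of_eq (by omega) h)]
    exact tneg_susp F ω hF 0 X (isStalkKb_of_eq (by omega) hs) (isStalkKb_of_eq (by omega) h)
  · -- n ≥ 0
    have h2 : 0 ≤ n := by omega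
    have h1 : (0:ℤ) ≤ n + 1 := by omega
    unfold tt
    rw [dif_pos h1, dif_pos h2]
    rw [tpos_congr F ω hF (show (n+1).toNat = n.toNat + 1 by omega) _ _
      (isStalkKb_of_eq (by omega) hs)]
    exact tpos_susp F ω hF n.toNat X _ _

lemma isZero_of_two_stalks {n m : ℤ} (hnm : n ≠ m) {X : Kb V}
    (h1 : IsStalkKb V n X) (h2 : IsStalkKb V m X) : IsZero X := by
  have hz : ∀ i, IsZero ((X.obj.as).X i) := fun i => by
    by_cases hi : i = -n
    · exact h2 i (by omega)
    · exact h1 i hi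
  have hid : 𝟙 (X.obj.as) = 0 := by
    ext i
    exact (hz i).eq_of_src _ _
  have h0 : 𝟙 X.obj = 0 := by
    exact ((HomotopyCategory.quotient V (ComplexShape.up ℤ)).map_id X.obj.as).symm.trans
      ((congrArg (HomotopyCategory.quotient V (ComplexShape.up ℤ)).map hid).trans
        ((HomotopyCategory.quotient V (ComplexShape.up ℤ)).map_zero _ _))
  exact (IsZero.iff_id_eq_zero _).2 (ObjectProperty.hom_ext _ h0)

lemma isZero_susp_of {X : Kb V} (h : IsZero X) : IsZero ((SuspKb V).obj X) := by
  have h0 : 𝟙 X.obj = 0 := congrArg InducedCategory.Hom.hom ((IsZero.iff_id_eq_zero X).1 h)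
  refine (IsZero.iff_id_eq_zero _).2 ?_
  apply ObjectProperty.hom_ext
  show 𝟙 ((SuspKb V).obj X).obj = 0
  exact ((shiftFunctor KH (1:ℤ)).map_id X.obj).symm.trans
    ((congrArg (shiftFunctor KH (1:ℤ)).map h0).trans ((shiftFunctor KH (1:ℤ)).map_zero _ _))

lemma isZero_of_susp {X : Kb V} (h : IsZero ((SuspKb V).obj X)) : IsZero X := by
  have h0k : 𝟙 ((SuspKb V).obj X) = 0 := (IsZero.iff_id_eq_zero _).1 h
  have h0 : 𝟙 ((SuspKb V).obj X).obj = 0 := congrArg InducedCategory.Hom.hom h0k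
  refine (IsZero.iff_id_eq_zero _).2 ?_
  apply ObjectProperty.hom_ext
  show 𝟙 X.obj = 0
  apply (shiftFunctor KH (1:ℤ)).map_injective
  rw [(shiftFunctor KH (1:ℤ)).map_id, (shiftFunctor KH (1:ℤ)).map_zero]
  exact h0

end Aux5
section Aux6

open CategoryTheory Limits Pretriangulated

set_option linter.unusedSectionVars false

variable {k : Type*} [Field k]
variable {V : Type*} [Category V] [Preadditive V] [Linear k V]
  [HasZeroObject V] [HasBinaryBiproducts V]

local notation "KH" => HomotopyCategory V (ComplexShape.up ℤ)

variable (F : Kb V ⥤ Kb V) (ω : SuspKb V ⋙ F ≅ F ⋙ SuspKb V)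
  (hF : IsPseudoIdentity k V F ω)

lemma tt_congr {n m : ℤ} (e : n = m) (X : Kb V) (h : IsStalkKb V n X)
    (h' : IsStalkKb V m X) : tt F ω hF X n h = tt F ω hF X m h' := by subst e; rfl

open Classical in
/-- The normalizing automorphism of an arbitrary object. -/
noncomputable def ddK (X : Kb V) : X ⟶ X :=
  if h : ∃ n, IsStalkKb V n X then tt F ω hF X h.choose h.choose_spec else 𝟙 X

lemma ddK_isIso (X : Kb V) : IsIso (ddK F ω hF X) := by
  unfold ddK
  split_ifs with h
  · exact tt_isIso F ω hF _ _ _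
  · infer_instance

lemma ddK_eq_tt {n : ℤ} {X : Kb V} (hX : IsStalkKb V n X) (hnz : ¬ IsZero X) :
    ddK F ω hF X = tt F ω hF X n hX := by
  have hex : ∃ m, IsStalkKb V m X := ⟨n, hX⟩
  unfold ddK
  rw [dif_pos hex]
  have e : hex.choose = n := by
    by_contra hne
    exact hnz (isZero_of_two_stalks hne hex.choose_spec hX)
  exact tt_congr F ω hF e X _ _

lemma ddK_natural {n : ℤ} {X Y : Kb V} (hX : IsStalkKb V n X) (hY : IsStalkKb V n Y)
    (f : X ⟶ Y) : ddK F ω hF X ≫ f = f ≫ ddK F ω hF Y := by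
  by_cases hzX : IsZero X
  · have hf : f = 0 := hzX.eq_of_src f 0
    rw [hf, Limits.zero_comp, Limits.comp_zero]
  by_cases hzY : IsZero Y
  · have hf : f = 0 := hzY.eq_of_tgt f 0
    rw [hf, Limits.zero_comp, Limits.comp_zero]
  rw [ddK_eq_tt F ω hF hX hzX, ddK_eq_tt F ω hF hY hzY]
  exact tt_natural F ω hF hX hY f

lemma ddK_susp {n : ℤ} {X : Kb V} (hX : IsStalkKb V n X) :
    ddK F ω hF ((SuspKb V).obj X) = omt F ω hF X ≫ (SuspKb V).map (ddK F ω hF X) := by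
  by_cases hz : IsZero X
  · exact (isZero_susp_of hz).eq_of_src _ _
  · have hzs : ¬ IsZero ((SuspKb V).obj X) := fun hh => hz (isZero_of_susp hh)
    rw [ddK_eq_tt F ω hF (isStalkKb_susp hX) hzs, ddK_eq_tt F ω hF hX hz]
    exact tt_susp F ω hF hX (isStalkKb_susp hX)

end Aux6
section Aux7

open CategoryTheory Limits Pretriangulated

set_option linter.unusedSectionVars false

variable {k : Type*} [Field k]
variable {V : Type*} [Category V] [Preadditive V] [Linear k V]
  [HasZeroObject V] [HasBinaryBiproducts V]

local notation "KH" => HomotopyCategory V (ComplexShape.up ℤ)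

variable (F : Kb V ⥤ Kb V) (ω : SuspKb V ⋙ F ≅ F ⋙ SuspKb V)
  (hF : IsPseudoIdentity k V F ω)

/-- The component of the isomorphism `F ≅ F'`. -/
noncomputable def del (X : Kb V) : F.obj X ⟶ F.obj X :=
  eqToHom (hF.obj_eq X) ≫ ddK F ω hF X ≫ eqToHom (hF.obj_eq X).symm

lemma del_isIso (X : Kb V) : IsIso (del F ω hF X) := by
  unfold del
  haveI := ddK_isIso F ω hF X
  infer_instance

attribute [local instance] del_isIso

/-- The conjugated functor `F'`. -/
@[reducible]
noncomputable def Fc : Kb V ⥤ Kb V where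
  obj := F.obj
  map {X Y} f := inv (del F ω hF X) ≫ F.map f ≫ del F ω hF Y
  map_id X := by
    rw [F.map_id, Category.id_comp, IsIso.inv_hom_id]
  map_comp {X Y Z} f g := by
    rw [F.map_comp]
    simp only [Category.assoc, IsIso.hom_inv_id_assoc]

lemma del_conj {X Y : Kb V} (f : X ⟶ Y) :
    del F ω hF X ≫ (Fc F ω hF).map f = F.map f ≫ del F ω hF Y := by
  show del F ω hF X ≫ inv (del F ω hF X) ≫ F.map f ≫ del F ω hF Y = _
  rw [IsIso.hom_inv_id_assoc]

/-- The isomorphism `δ : F ≅ F'`. -/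
noncomputable def deli : F ≅ Fc F ω hF :=
  NatIso.ofComponents (fun X => asIso (del F ω hF X))
    (fun {X Y} f => by
      simp only [asIso_hom]
      rw [del_conj])

/-- The conjugated shift compatibility `ω'`. -/
noncomputable def omc : SuspKb V ⋙ Fc F ω hF ≅ Fc F ω hF ⋙ SuspKb V :=
  Functor.isoWhiskerLeft (SuspKb V) (deli F ω hF).symm ≪≫ ω ≪≫ Functor.isoWhiskerRight (deli F ω hF) (SuspKb V)

lemma omc_app (X : Kb V) :
    (omc F ω hF).hom.app X = inv (del F ω hF ((SuspKb V).obj X)) ≫ ω.hom.app X ≫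
      (SuspKb V).map (del F ω hF X) := by
  simp [omc, deli]

lemma omega_app_eq (X : Kb V) :
    ω.hom.app X = eqToHom (hF.obj_eq ((SuspKb V).obj X)) ≫ omt F ω hF X ≫
      eqToHom (congrArg (SuspKb V).obj (hF.obj_eq X)).symm := by
  unfold omt
  simp

lemma deli_compat (X : Kb V) :
    (deli F ω hF).hom.app ((SuspKb V).obj X) ≫ (omc F ω hF).hom.app X =
      ω.hom.app X ≫ (SuspKb V).map ((deli F ω hF).hom.app X) := by
  rw [omc_app]
  simp [deli]

end Aux7
section Aux8

open CategoryTheory Limits Pretriangulated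

set_option linter.unusedSectionVars false

variable {k : Type*} [Field k]
variable {V : Type*} [Category V] [Preadditive V] [Linear k V]
  [HasZeroObject V] [HasBinaryBiproducts V]

local notation "KH" => HomotopyCategory V (ComplexShape.up ℤ)

variable (F : Kb V ⥤ Kb V) (ω : SuspKb V ⋙ F ≅ F ⋙ SuspKb V)
  (hF : IsPseudoIdentity k V F ω)

attribute [local instance] del_isIso

lemma del_inv (X : Kb V) :
    inv (del F ω hF X) =
      eqToHom (hF.obj_eq X) ≫ (haveI := ddK_isIso F ω hF X; inv (ddK F ω hF X)) ≫
        eqToHom (hF.obj_eq X).symm := by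
  haveI := ddK_isIso F ω hF X
  unfold del
  simp

lemma Fc_map_eq {X Y : Kb V} (f : X ⟶ Y) :
    (Fc F ω hF).map f = inv (del F ω hF X) ≫ F.map f ≫ del F ω hF Y := rfl

lemma Fc_map_stalk {n : ℤ} {X Y : Kb V} (hX : IsStalkKb V n X) (hY : IsStalkKb V n Y)
    (f : X ⟶ Y) :
    (Fc F ω hF).map f = eqToHom (hF.obj_eq X) ≫ f ≫ eqToHom (hF.obj_eq Y).symm := by
  haveI := ddK_isIso F ω hF X
  have key : inv (ddK F ω hF X) ≫ f ≫ ddK F ω hF Y = f := by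
    rw [← ddK_natural F ω hF hX hY f, IsIso.inv_hom_id_assoc]
  rw [Fc_map_eq, del_inv, hF.map_stalk n X Y hX hY f]
  unfold del
  simp only [Category.assoc, eqToHom_trans, eqToHom_refl, Category.comp_id, Category.id_comp,
    eqToHom_trans_assoc]
  rw [reassoc_of% key]

lemma Fc_additive : (Fc F ω hF).Additive := by
  haveI := hF.additive
  constructor
  intro X Y f g
  rw [Fc_map_eq, F.map_add, Preadditive.add_comp, Preadditive.comp_add]

lemma Fc_linear : letI := Fc_additive F ω hF; (Fc F ω hF).Linear k := by
  letI := Fc_additive F ω hF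
  haveI := hF.additive
  haveI := hF.linear
  constructor
  intro X Y f r
  rw [Fc_map_eq, F.map_smul, Linear.smul_comp, Linear.comp_smul]

/-- Isomorphism in the homotopy category from one in `Kb`. -/
def isoHofKb {X Y : Kb V} (e : X ≅ Y) : X.obj ≅ Y.obj where
  hom := e.hom.hom
  inv := e.inv.hom
  hom_inv_id := congrArg InducedCategory.Hom.hom e.hom_inv_id
  inv_hom_id := congrArg InducedCategory.Hom.hom e.inv_hom_id

lemma third_comm (X Z : Kb V) (h : Z ⟶ (SuspKb V).obj X) :
    del F ω hF Z ≫ ((Fc F ω hF).map h ≫ (omc F ω hF).hom.app X) =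
      (F.map h ≫ ω.hom.app X) ≫ (SuspKb V).map (del F ω hF X) := by
  rw [omc_app, Fc_map_eq]
  simp only [Category.assoc, IsIso.hom_inv_id_assoc]

lemma Fc_exact (X Y Z : Kb V) (f : X ⟶ Y) (g : Y ⟶ Z) (h : Z ⟶ (SuspKb V).obj X)
    (E : ExactKb V f g h) :
    ExactKb V ((Fc F ω hF).map f) ((Fc F ω hF).map g)
      ((Fc F ω hF).map h ≫ (omc F ω hF).hom.app X) := by
  have E1 := hF.exact X Y Z f g h E
  refine Pretriangulated.isomorphic_distinguished _ E1 _ ?_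
  refine (Triangle.isoMk _ _ (isoHofKb (asIso (del F ω hF X))) (isoHofKb (asIso (del F ω hF Y)))
    (isoHofKb (asIso (del F ω hF Z))) ?_ ?_ ?_).symm
  · exact congrArg InducedCategory.Hom.hom (del_conj F ω hF f).symm
  · exact congrArg InducedCategory.Hom.hom (del_conj F ω hF g).symm
  · exact congrArg InducedCategory.Hom.hom (third_comm F ω hF X Z h).symm

end Aux8

section Fin

open CategoryTheory Limits Pretriangulated

set_option linter.unusedSectionVars false

variable {k : Type*} [Field k]
variable {V : Type*} [Category V] [Preadditive V] [Linear k V]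
  [HasZeroObject V] [HasBinaryBiproducts V]

local notation "KH" => HomotopyCategory V (ComplexShape.up ℤ)

variable (F : Kb V ⥤ Kb V) (ω : SuspKb V ⋙ F ≅ F ⋙ SuspKb V)
  (hF : IsPseudoIdentity k V F ω)

attribute [local instance] del_isIso

lemma omc_normalized : IsNormalizedPseudoIdentity V (Fc F ω hF) (omc F ω hF) := by
  intro n X hX
  have e : (Fc F ω hF).obj ((SuspKb V).obj X) = (SuspKb V).obj ((Fc F ω hF).obj X) := by
    show F.obj _ = (SuspKb V).obj (F.obj X)
    rw [hF.obj_eq, hF.obj_eq]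
  refine ⟨e, ?_⟩
  haveI := ddK_isIso F ω hF ((SuspKb V).obj X)
  haveI := ddK_isIso F ω hF X
  have hsusp := ddK_susp F ω hF hX
  rw [omc_app, omega_app_eq F ω hF X, del_inv]
  unfold del
  simp only [Functor.map_comp, eqToHom_map, Category.assoc, eqToHom_trans, eqToHom_refl,
    Category.comp_id, Category.id_comp, eqToHom_trans_assoc]
  rw [← reassoc_of% hsusp, IsIso.inv_hom_id_assoc, eqToHom_trans]


end Fin
open CategoryTheory Limits Pretriangulated in
/--
Let A be a k-linear additive category and let (F, ω) be a pseudo-identity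
on K^b(A). Then there exists a normalized pseudo-identity (F′, ω′) on K^b(A) together
with an isomorphism of triangle functors δ: (F, ω) → (F′, ω′).
-/
theorem stmt_8 {k : Type*} [Field k]
    (A : Type*) [Category A] [Preadditive A] [Linear k A]
    [HasZeroObject A] [HasBinaryBiproducts A]
    (F : Kb A ⥤ Kb A) (ω : SuspKb A ⋙ F ≅ F ⋙ SuspKb A)
    (hF : IsPseudoIdentity k A F ω) :
    ∃ (F' : Kb A ⥤ Kb A) (ω' : SuspKb A ⋙ F' ≅ F' ⋙ SuspKb A),
      IsPseudoIdentity k A F' ω' ∧ IsNormalizedPseudoIdentity A F' ω' ∧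
      ∃ δ : F ≅ F', ∀ X : Kb A,
        δ.hom.app ((SuspKb A).obj X) ≫ ω'.hom.app X =
          ω.hom.app X ≫ (SuspKb A).map (δ.hom.app X) := by
  refine ⟨Fc F ω hF, omc F ω hF,
    ⟨Fc_additive F ω hF, Fc_linear F ω hF, hF.obj_eq,
      fun n X Y hX hY f => Fc_map_stalk F ω hF hX hY f,
      fun X Y Z f g h E => Fc_exact F ω hF X Y Z f g h E⟩,
    omc_normalized F ω hF, deli F ω hF, deli_compat F ω hF⟩
end
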